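/- Let E, E' be k-dimensional and F, F' be l-dimensional subspaces of ℂ^n such that the pairs (E,F) and (E',F') have the same principal angles (with multiplicity). Then there exists a unitary operator U on ℂ^n with U(E) = E' and U(F) = F'; consequently, for every polynomial π in two non-commuting variables, the operators π(P_E, P_F) and π(P_{E'}, P_{F'}) have the same multiset of eigenvalues with multiplicity. -/

import Mathlib

open Module Real
open scoped InnerProductSpace

/-- The matrix (in the standard basis of `ℂ^n`) of the orthogonal projection onto `E`. -/
noncomputable def projMat {n : ℕ} (E : Submodule ℂ (EuclideanSpace ℂ (Fin n))) :
    Matrix (Fin n) (Fin n) ℂ :=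
  Matrix.toEuclideanLin.symm ((E.subtypeL.comp E.orthogonalProjectionOnto).toLinearMap)

/-- `e` is an orthonormal basis of the subspace `E`: an orthonormal family spanning `E`. -/
def IsONBasisOf {n k : ℕ} (E : Submodule ℂ (EuclideanSpace ℂ (Fin n)))
    (e : Fin k → EuclideanSpace ℂ (Fin n)) : Prop :=
  Orthonormal ℂ e ∧ Submodule.span ℂ (Set.range e) = E

/-- `θ : Fin r → ℝ` (with `r = min k l`) is the family of principal angles of `(E, F)`:
nondecreasing, with values in `[0, π/2]`, realized by a pair of orthonormal bases. -/
def IsPrincipalAngles {n : ℕ} (k l : ℕ) (E F : Submodule ℂ (EuclideanSpace ℂ (Fin n)))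
    {r : ℕ} (θ : Fin r → ℝ) : Prop :=
  ∃ _hr : r = min k l, Monotone θ ∧ (∀ i, θ i ∈ Set.Icc (0:ℝ) (π/2)) ∧
    ∃ (e : Fin k → EuclideanSpace ℂ (Fin n)) (f : Fin l → EuclideanSpace ℂ (Fin n)),
      IsONBasisOf E e ∧ IsONBasisOf F f ∧
      ∀ (i : Fin k) (j : Fin l),
        ⟪e i, f j⟫_ℂ =
          if h : (i : ℕ) = (j : ℕ)
          then (Real.cos (θ ⟨i, by have := i.isLt; have := j.isLt; omega⟩) : ℂ)
          else 0

/-- `θ' : Fin r → ℝ` is the family of *nonzero* principal angles of `(E, F)`: the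
principal angles of `(E, F)` are `θ'` preceded by `m` zero angles. -/
def IsNonzeroPrincipalAngles {n : ℕ} (k l : ℕ) (E F : Submodule ℂ (EuclideanSpace ℂ (Fin n)))
    {r : ℕ} (θ' : Fin r → ℝ) : Prop :=
  ∃ θ : Fin (min k l) → ℝ, IsPrincipalAngles k l E F θ ∧
    ∃ m : ℕ, ∃ _hmr : m + r = min k l,
      (∀ i : Fin (min k l), θ i = 0 ↔ (i : ℕ) < m) ∧
      ∀ i : Fin r, θ' i = θ ⟨m + i, by have := i.isLt; omega⟩

lemma exists_isometryEquiv_of_gram_eq {ι : Type*} [Fintype ι] [DecidableEq ι]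
    {H : Type*} [NormedAddCommGroup H] [InnerProductSpace ℂ H] [FiniteDimensional ℂ H]
    (g g' : ι → H) (hgram : ∀ i j, ⟪g i, g j⟫_ℂ = ⟪g' i, g' j⟫_ℂ) :
    ∃ U : H ≃ₗᵢ[ℂ] H, ∀ i, U (g i) = g' i := by
  classical
  set A : (ι → ℂ) →ₗ[ℂ] H := Fintype.linearCombination ℂ g with hA
  set A' : (ι → ℂ) →ₗ[ℂ] H := Fintype.linearCombination ℂ g' with hA'
  have hinner : ∀ c d : ι → ℂ, ⟪A c, A d⟫_ℂ = ⟪A' c, A' d⟫_ℂ := by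
    intro c d
    simp only [hA, hA', Fintype.linearCombination_apply, sum_inner, inner_sum,
      inner_smul_left, inner_smul_right]
    simp only [hgram]
  have hnorm : ∀ c, ‖A' c‖ = ‖A c‖ := by
    intro c
    have h := (hinner c c).symm
    rw [inner_self_eq_norm_sq_to_K, inner_self_eq_norm_sq_to_K] at h
    have h2 : (‖A' c‖:ℝ)^2 = (‖A c‖:ℝ)^2 := by exact_mod_cast h
    exact (sq_eq_sq₀ (norm_nonneg _) (norm_nonneg _)).mp h2
  have hker : LinearMap.ker A ≤ LinearMap.ker A' := by
    intro c hc
    rw [LinearMap.mem_ker] at *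
    have := hnorm c
    rw [hc, norm_zero, norm_eq_zero] at this
    exact this
  let ψ : LinearMap.range A →ₗ[ℂ] H :=
    ((LinearMap.ker A).liftQ A' hker).comp (A.quotKerEquivRange.symm : _ ≃ₗ[ℂ] _).toLinearMap
  have hψ : ∀ c : ι → ℂ, ψ ⟨A c, LinearMap.mem_range_self A c⟩ = A' c := by
    intro c
    have h1 : A.quotKerEquivRange (Submodule.Quotient.mk c) = ⟨A c, LinearMap.mem_range_self A c⟩ :=
      Subtype.ext (A.quotKerEquivRange_apply_mk c)
    have h2 : A.quotKerEquivRange.symm ⟨A c, LinearMap.mem_range_self A c⟩ =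
        Submodule.Quotient.mk c := by rw [LinearEquiv.symm_apply_eq, h1]
    simp only [ψ, LinearMap.comp_apply, LinearEquiv.coe_coe, h2, Submodule.liftQ_apply]
  have hψn : ∀ x : LinearMap.range A, ‖ψ x‖ = ‖x‖ := by
    rintro ⟨x, c, rfl⟩
    rw [hψ c]
    exact hnorm c
  let S : LinearMap.range A →ₗᵢ[ℂ] H := ⟨ψ, hψn⟩
  let U := S.extend.toLinearIsometryEquiv rfl
  refine ⟨U, fun i => ?_⟩
  have h1 : g i = A (Pi.single i 1) := by simp [hA]
  have h2 : g' i = A' (Pi.single i 1) := by simp [hA']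
  have h3 : U (g i) = S.extend (g i) := congrFun (S.extend.coe_toLinearIsometryEquiv rfl) (g i)
  rw [h3, h2, h1]
  calc S.extend (A (Pi.single i 1))
      = S.extend ((⟨A (Pi.single i 1), LinearMap.mem_range_self A _⟩ : LinearMap.range A) : H) := rfl
    _ = S ⟨A (Pi.single i 1), LinearMap.mem_range_self A _⟩ := S.extend_apply _
    _ = A' (Pi.single i 1) := hψ _

open Polynomial in
lemma charpoly_unitary_conj {n : ℕ} (M X : Matrix (Fin n) (Fin n) ℂ)
    (hM : M ∈ Matrix.unitaryGroup (Fin n) ℂ) :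
    (M * X * star M).charpoly = X.charpoly := by
  have h1 : M * star M = 1 := Matrix.mem_unitaryGroup_iff.mp hM
  have hC : M.map (C : ℂ →+* ℂ[X]) * (star M).map C = 1 := by
    rw [← Matrix.map_mul, h1, Matrix.map_one _ (map_zero _) (map_one _)]
  have h2 : star M * M = 1 := Matrix.mem_unitaryGroup_iff'.mp hM
  have hC' : (star M).map (C : ℂ →+* ℂ[X]) * M.map C = 1 := by
    rw [← Matrix.map_mul, h2, Matrix.map_one _ (map_zero _) (map_one _)]
  have key : Matrix.charmatrix (M * X * star M)
      = M.map C * Matrix.charmatrix X * (star M).map C := by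
    unfold Matrix.charmatrix
    simp only [RingHom.mapMatrix_apply]
    rw [Matrix.mul_sub, Matrix.sub_mul, ← Matrix.map_mul, ← Matrix.map_mul]
    congr 1
    · have hc := (Matrix.scalar_commute (Polynomial.X : ℂ[X]) (fun r => Commute.all _ r)
        (M.map (C : ℂ →+* ℂ[X]))).eq
      rw [← hc, Matrix.mul_assoc, hC, Matrix.mul_one]
  unfold Matrix.charpoly
  rw [key, Matrix.det_mul, Matrix.det_mul, mul_comm, ← mul_assoc, ← Matrix.det_mul, hC',
    Matrix.det_one, one_mul]

theorem unitary_equivalence_of_same_principal_angles {n k l : ℕ}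
    (E E' F F' : Submodule ℂ (EuclideanSpace ℂ (Fin n)))
    (hE : finrank ℂ E = k) (hE' : finrank ℂ E' = k)
    (hF : finrank ℂ F = l) (hF' : finrank ℂ F' = l)
    (hangles : ∃ θ : Fin (min k l) → ℝ,
      IsPrincipalAngles k l E F θ ∧ IsPrincipalAngles k l E' F' θ) :
    (∃ U ∈ Matrix.unitaryGroup (Fin n) ℂ,
        Submodule.map (Matrix.toEuclideanLin U) E = E' ∧
        Submodule.map (Matrix.toEuclideanLin U) F = F') ∧
    ∀ p : FreeAlgebra ℂ (Fin 2),
      ((FreeAlgebra.lift ℂ ![projMat E, projMat F]) p).charpoly.roots =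
      ((FreeAlgebra.lift ℂ ![projMat E', projMat F']) p).charpoly.roots := by
  obtain ⟨θ, hP, hP'⟩ := hangles
  obtain ⟨hr, hmono, hIcc, e, f, ⟨heo, hes⟩, ⟨hfo, hfs⟩, hef⟩ := hP
  obtain ⟨hr', hmono', hIcc', e', f', ⟨heo', hes'⟩, ⟨hfo', hfs'⟩, hef'⟩ := hP'
  have hgram : ∀ i j : Fin k ⊕ Fin l,
      ⟪Sum.elim e f i, Sum.elim e f j⟫_ℂ = ⟪Sum.elim e' f' i, Sum.elim e' f' j⟫_ℂ := by
    rintro (i|i) (j|j) <;> simp only [Sum.elim_inl, Sum.elim_inr]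
    · rw [orthonormal_iff_ite.mp heo, orthonormal_iff_ite.mp heo']
    · rw [hef, hef']
    · rw [← inner_conj_symm (f i) (e j), ← inner_conj_symm (f' i) (e' j), hef, hef']
    · rw [orthonormal_iff_ite.mp hfo, orthonormal_iff_ite.mp hfo']
  obtain ⟨U, hU⟩ := exists_isometryEquiv_of_gram_eq _ _ hgram
  have hUe : ∀ i, U (e i) = e' i := fun i => hU (Sum.inl i)
  have hUf : ∀ i, U (f i) = f' i := fun i => hU (Sum.inr i)
  have hUE : Submodule.map
      (U.toLinearEquiv : EuclideanSpace ℂ (Fin n) →ₗ[ℂ] EuclideanSpace ℂ (Fin n)) E = E' := by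
    rw [← hes, ← hes', Submodule.map_span, ← Set.range_comp]
    congr 1
    exact congrArg _ (funext hUe)
  have hUF : Submodule.map
      (U.toLinearEquiv : EuclideanSpace ℂ (Fin n) →ₗ[ℂ] EuclideanSpace ℂ (Fin n)) F = F' := by
    rw [← hfs, ← hfs', Submodule.map_span, ← Set.range_comp]
    congr 1
    exact congrArg _ (funext hUf)
  -- matrix of U
  let a := EuclideanSpace.basisFun (Fin n) ℂ
  let b : OrthonormalBasis (Fin n) ℂ (EuclideanSpace ℂ (Fin n)) := a.map U
  let M := a.toBasis.toMatrix b.toBasis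
  have hMunit : M ∈ Matrix.unitaryGroup (Fin n) ℂ :=
    a.toMatrix_orthonormalBasis_mem_unitary b
  have hMlin : Matrix.toEuclideanLin M =
      (U.toLinearEquiv : EuclideanSpace ℂ (Fin n) →ₗ[ℂ] EuclideanSpace ℂ (Fin n)) := by
    have hM : M = LinearMap.toMatrix a.toBasis a.toBasis
        (U.toLinearEquiv : EuclideanSpace ℂ (Fin n) →ₗ[ℂ] EuclideanSpace ℂ (Fin n)) := by
      ext i j
      show a.toBasis.toMatrix b.toBasis i j = _
      rw [Basis.toMatrix_apply]
      rw [LinearMap.toMatrix_apply]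
      simp [b, OrthonormalBasis.coe_toBasis, OrthonormalBasis.map_apply,
        OrthonormalBasis.coe_toBasis_repr_apply]
    rw [hM, Matrix.toEuclideanLin_eq_toLin_orthonormal, Matrix.toLin_toMatrix]
  have hmul : ∀ A B : Matrix (Fin n) (Fin n) ℂ,
      Matrix.toEuclideanLin (A * B) = (Matrix.toEuclideanLin A).comp (Matrix.toEuclideanLin B) := by
    intro A B
    rw [Matrix.toEuclideanLin_eq_toLin_orthonormal]
    exact Matrix.toLin_mul _ _ _ A B
  have hstar : Matrix.toEuclideanLin (star M) =
      (U.symm.toLinearEquiv : EuclideanSpace ℂ (Fin n) →ₗ[ℂ] EuclideanSpace ℂ (Fin n)) := by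
    apply LinearMap.ext
    intro x
    apply U.injective
    have h1 : M * star M = 1 := Matrix.mem_unitaryGroup_iff.mp hMunit
    have h2 := congrFun (congrArg (⇑) (hmul M (star M))) x
    rw [h1] at h2
    have h3 : Matrix.toEuclideanLin (1 : Matrix (Fin n) (Fin n) ℂ) x = x := by
      rw [Matrix.toEuclideanLin_eq_toLin_orthonormal, Matrix.toLin_one]; rfl
    rw [h3] at h2
    have h4 : U (Matrix.toEuclideanLin (star M) x)
        = Matrix.toEuclideanLin M (Matrix.toEuclideanLin (star M) x) := by rw [hMlin]; rfl
    rw [h4, ← LinearMap.comp_apply, ← h2]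
    simp
  -- projection conjugation
  have hproj : ∀ (W : Submodule ℂ (EuclideanSpace ℂ (Fin n))),
      projMat (Submodule.map (U.toLinearEquiv : EuclideanSpace ℂ (Fin n) →ₗ[ℂ] EuclideanSpace ℂ (Fin n)) W)
        = M * projMat W * star M := by
    intro W
    set W' := Submodule.map (U.toLinearEquiv : EuclideanSpace ℂ (Fin n) →ₗ[ℂ] EuclideanSpace ℂ (Fin n)) W with hW'
    have : Matrix.toEuclideanLin (M * projMat W * star M)
        = ((W'.subtypeL.comp W'.orthogonalProjectionOnto).toLinearMap) := by
      rw [hmul, hmul]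
      apply LinearMap.ext
      intro x
      have hP : Matrix.toEuclideanLin (projMat W)
          = (W.subtypeL.comp W.orthogonalProjectionOnto).toLinearMap :=
        Matrix.toEuclideanLin.apply_symm_apply _
      have key := Submodule.starProjection_map_apply (𝕜 := ℂ) U W x
      simp only [LinearMap.comp_apply, hMlin, hstar, hP]
      simpa using key.symm
    rw [projMat, ← this, LinearEquiv.symm_apply_apply]
  have hPE' : projMat E' = M * projMat E * star M := by rw [← hUE]; exact hproj E
  have hPF' : projMat F' = M * projMat F * star M := by rw [← hUF]; exact hproj F
  have h1 : M * star M = 1 := Matrix.mem_unitaryGroup_iff.mp hMunit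
  have h2 : star M * M = 1 := Matrix.mem_unitaryGroup_iff'.mp hMunit
  constructor
  · exact ⟨M, hMunit, by rw [hMlin]; exact hUE, by rw [hMlin]; exact hUF⟩
  · -- conjugation algebra homomorphism
    let c : Matrix (Fin n) (Fin n) ℂ →ₐ[ℂ] Matrix (Fin n) (Fin n) ℂ :=
      { toFun := fun X => M * X * star M
        map_one' := by show M * 1 * star M = 1; rw [mul_one, h1]
        map_mul' := fun X Y => by
          show M * (X * Y) * star M = M * X * star M * (M * Y * star M)
          rw [show M * X * star M * (M * Y * star M) = M * X * ((star M * M) * (Y * star M)) by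
            simp only [Matrix.mul_assoc], h2, one_mul]
          simp only [Matrix.mul_assoc]
        map_zero' := by show M * 0 * star M = 0; simp
        map_add' := fun X Y => by
          show M * (X + Y) * star M = M * X * star M + M * Y * star M
          rw [Matrix.mul_add, Matrix.add_mul]
        commutes' := fun r => by
          show M * (algebraMap ℂ _ r) * star M = algebraMap ℂ _ r
          simp only [Algebra.algebraMap_eq_smul_one, Matrix.mul_smul, Matrix.smul_mul,
            mul_one, h1] }
    have hc : (c.comp (FreeAlgebra.lift ℂ ![projMat E, projMat F]))
        = FreeAlgebra.lift ℂ ![projMat E', projMat F'] := by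
      apply FreeAlgebra.hom_ext
      funext i
      fin_cases i <;>
        simp only [Function.comp_apply, AlgHom.coe_comp, FreeAlgebra.lift_ι_apply,
          Matrix.cons_val_zero, Matrix.cons_val_one, Matrix.head_cons] <;>
        [rw [hPE']; rw [hPF']] <;> rfl
    intro p
    have hcp : (FreeAlgebra.lift ℂ ![projMat E', projMat F']) p
        = M * ((FreeAlgebra.lift ℂ ![projMat E, projMat F]) p) * star M := by
      rw [← hc]; rfl
    rw [hcp, charpoly_unitary_conj _ _ hMunit]
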